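/- Let P be a convex polytope that k-tiles ℝ^d with a discrete multiset Λ. If every element of Λ is contained in a lattice L, then there exists a positive integer m such that P m-tiles ℝ^d with L (each point of L taken with multiplicity one). -/

import Mathlib

open Set Pointwise

noncomputable section

abbrev Euc (d : ℕ) : Type := EuclideanSpace ℝ (Fin d)

/-- A "discrete multiset" of vectors: a multiplicity function with locally finite support. -/
def IsDiscreteMultiset {d : ℕ} (m : Euc d → ℕ) : Prop :=
  ∀ x : Euc d, ∃ U ∈ nhds x, {y : Euc d | y ∈ U ∧ m y ≠ 0}.Finite

/-- `∑_{λ∈Λ} 1_{P+λ}(v)`, counted with multiplicity. -/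
def coverCount {d : ℕ} (m : Euc d → ℕ) (P : Set (Euc d)) (v : Euc d) : ℕ :=
  ∑ᶠ l : Euc d, m l * P.indicator 1 (v - l)

/-- The set `∂P + Λ`. -/
def boundarySum {d : ℕ} (P : Set (Euc d)) (m : Euc d → ℕ) : Set (Euc d) :=
  {x : Euc d | ∃ l : Euc d, m l ≠ 0 ∧ x - l ∈ frontier P}

/-- `P` `k`-tiles `ℝ^d` with the discrete multiset `m`: every point not in `∂P + Λ`
is covered exactly `k` times. -/
def Tiles {d : ℕ} (P : Set (Euc d)) (m : Euc d → ℕ) (k : ℕ) : Prop :=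
  ∀ v : Euc d, v ∉ boundarySum P m → coverCount m P v = k

/-- A lattice in ℝ^d: a discrete additive subgroup of full rank, viewed as a set. -/
def IsLattice {d : ℕ} (L : Set (Euc d)) : Prop :=
  ∃ H : AddSubgroup (Euc d), L = (H : Set (Euc d)) ∧
    DiscreteTopology H ∧ Submodule.span ℝ (H : Set (Euc d)) = ⊤

/-- A set viewed as a multiset with all multiplicities one. -/
def setMult {d : ℕ} (L : Set (Euc d)) : Euc d → ℕ := L.indicator 1

/-- A convex polytope: convex hull of a finite set of points, with nonempty interior. -/
def IsConvexPolytope {d : ℕ} (P : Set (Euc d)) : Prop :=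
  (∃ S : Set (Euc d), S.Finite ∧ P = convexHull ℝ S) ∧ (interior P).Nonempty

/-- The half-open counterpart `P^h` of `P` with respect to the direction `h`. -/
def halfOpen {d : ℕ} (P : Set (Euc d)) (h : Euc d) : Set (Euc d) :=
  {v : Euc d | v ∈ closure P ∧
    ∃ ε : ℝ, 0 < ε ∧ ∀ c : ℝ, 0 < c → c < ε → v + c • h ∈ interior P}

/-- Every line with direction `h` meets `∂P` in finitely many points. -/
def GoodDirection {d : ℕ} (P : Set (Euc d)) (h : Euc d) : Prop :=
  ∀ x : Euc d, {c : ℝ | x + c • h ∈ frontier P}.Finite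

/-- `P^h` `k`-tiles `ℝ^d` with the discrete multiset `m`. -/
def TilesHalfOpen {d : ℕ} (P : Set (Euc d)) (h : Euc d) (m : Euc d → ℕ) (k : ℕ) : Prop :=
  ∀ v : Euc d, v ∉ boundarySum P m → coverCount m (halfOpen P h) v = k

/-- `L_Λ(v) = #(Λ ∩ (−1·P + v))`, counted with multiplicity. -/
def LEnum {d : ℕ} (m : Euc d → ℕ) (P : Set (Euc d)) (v : Euc d) : ℕ :=
  ∑ᶠ l : Euc d, m l * Set.indicator (v +ᵥ ((-1 : ℝ) • P)) 1 l

/-- `L^h_Λ(v) = #(Λ ∩ (−1·P^h + v))`, counted with multiplicity. -/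
def LEnumH {d : ℕ} (m : Euc d → ℕ) (P : Set (Euc d)) (h : Euc d) (v : Euc d) : ℕ :=
  LEnum m (halfOpen P h) v

section CoreLemmas
open Finset

def Wd (d r : ℕ) : Finset (Fin d → ℤ) :=
  Finset.Icc (fun _ => -(r:ℤ)) (fun _ => (r:ℤ))

lemma mem_Wd {d r : ℕ} {x : Fin d → ℤ} : x ∈ Wd d r ↔ ∀ i, -(r:ℤ) ≤ x i ∧ x i ≤ r := by
  simp [Wd, Finset.mem_Icc, Pi.le_def, forall_and]

lemma card_Wd (d r : ℕ) : (Wd d r).card = (2*r+1)^d := by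
  rw [Wd, Pi.card_Icc]
  have : ∀ i : Fin d, (Finset.Icc (-(r:ℤ)) (r:ℤ)).card = 2*r+1 := by
    intro i; rw [Int.card_Icc]; omega
  rw [Finset.prod_congr rfl (fun i _ => this i), Finset.prod_const, Finset.card_univ,
    Fintype.card_fin]

lemma Wd_mono {d : ℕ} {r s : ℕ} (h : r ≤ s) : Wd d r ⊆ Wd d s := by
  intro x hx
  rw [mem_Wd] at *
  intro i
  have h1 := hx i
  have h2 : (r:ℤ) ≤ s := by exact_mod_cast h
  constructor <;> omega

lemma sum_le_total {d t : ℕ} {c : (Fin d → ℤ) → ℕ} (hc : ∀ n, c n ≠ 0 → n ∈ Wd d t)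
    (s : Finset (Fin d → ℤ)) : ∑ n ∈ s, c n ≤ ∑ n ∈ Wd d t, c n := by
  have h1 : ∑ n ∈ s ∩ Wd d t, c n = ∑ n ∈ s, c n :=
    Finset.sum_subset Finset.inter_subset_left (fun x hx hnx => by
      by_contra hne
      exact hnx (Finset.mem_inter.mpr ⟨hx, hc x hne⟩))
  rw [← h1]
  exact Finset.sum_le_sum_of_subset Finset.inter_subset_right

lemma pow_diff_le (x y n : ℕ) (h : y ≤ x) : x^n ≤ y^n + (x - y) * n * x^(n-1) := by
  induction n with
  | zero => simp
  | succ n ih =>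
    have h1 : x * x^(n-1) ≤ x^n ∨ n = 0 := by
      rcases Nat.eq_zero_or_pos n with h0 | h0
      · right; exact h0
      · left
        have : n - 1 + 1 = n := by omega
        rw [← pow_succ', this]
    have h2 : x * ((x - y) * n * x^(n-1)) ≤ (x-y) * n * x^n := by
      rcases h1 with h1 | h1
      · calc x * ((x - y) * n * x^(n-1)) = (x-y)*n*(x * x^(n-1)) := by ring
        _ ≤ (x-y)*n*x^n := Nat.mul_le_mul_left _ h1
      · simp [h1]
    have h3 : x * y^n ≤ y^(n+1) + (x - y) * y^n := by
      have : x * y^n = y * y^n + (x-y) * y^n := by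
        rw [← Nat.add_mul]
        congr 1
        omega
      rw [this, pow_succ']
    calc x^(n+1) = x * x^n := by ring
    _ ≤ x * (y^n + (x - y) * n * x^(n-1)) := Nat.mul_le_mul_left _ ih
    _ = x * y^n + x * ((x-y) * n * x^(n-1)) := by ring
    _ ≤ (y^(n+1) + (x - y) * y^n) + (x-y) * n * x^n := Nat.add_le_add h3 h2
    _ ≤ (y^(n+1) + (x - y) * x^n) + (x-y) * n * x^n := by
        have : y^n ≤ x^n := Nat.pow_le_pow_left h n
        gcongr
    _ = y^(n+1) + (x - y) * (n+1) * x^(n+1-1) := by simp; ring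


lemma int_squeeze {t u w v : ℤ} (ht : 0 ≤ t) (h1 : -t ≤ (2*t+1)*u - w) (h2 : (2*t+1)*u - w ≤ t)
    (h3 : -t ≤ (2*t+1)*v - w) (h4 : (2*t+1)*v - w ≤ t) : u = v := by
  rcases lt_trichotomy u v with h | h | h
  · exfalso
    have h5 : (2*t+1) * 1 ≤ (2*t+1) * (v - u) :=
      mul_le_mul_of_nonneg_left (by omega) (by linarith)
    nlinarith
  · exact h
  · exfalso
    have h5 : (2*t+1) * 1 ≤ (2*t+1) * (u - v) :=
      mul_le_mul_of_nonneg_left (by omega) (by linarith)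
    nlinarith

lemma int_range {t N u w : ℤ} (ht : 0 ≤ t) (hu1 : -N ≤ u) (hu2 : u ≤ N)
    (h1 : -t ≤ (2*t+1)*u - w) (h2 : (2*t+1)*u - w ≤ t) :
    -((2*t+1)*N + t) ≤ w ∧ w ≤ (2*t+1)*N + t := by
  have hm1 : (2*t+1)*u ≤ (2*t+1)*N := mul_le_mul_of_nonneg_left hu2 (by linarith)
  have hm2 : (2*t+1)*(-N) ≤ (2*t+1)*u := mul_le_mul_of_nonneg_left hu1 (by linarith)
  constructor <;> nlinarith

lemma core_aux {d : ℕ} (k t : ℕ) (hk : 0 < k) (a c c' : (Fin d → ℤ) → ℕ)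
    (hc : ∀ n, c n ≠ 0 → n ∈ Wd d t) (hc' : ∀ n, c' n ≠ 0 → n ∈ Wd d t)
    (h1 : ∀ g, ∑ᶠ l, a l * c (g - l) = k)
    (h2 : ∀ g, ∑ᶠ l, a l * c' (g - l) = k) :
    ¬ (∑ n ∈ Wd d t, c' n < ∑ n ∈ Wd d t, c n) := by
  intro hlt
  classical
  set C : ℕ := ∑ n ∈ Wd d t, c n with hC
  set C' : ℕ := ∑ n ∈ Wd d t, c' n with hC'
  -- finset versions of the convolution identities
  have h1' : ∀ (b : (Fin d → ℤ) → ℕ), (∀ g, ∑ᶠ l, a l * b (g - l) = k) →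
      ∀ (g : Fin d → ℤ) (s : Finset (Fin d → ℤ)),
      (∀ l, a l * b (g - l) ≠ 0 → l ∈ s) → ∑ l ∈ s, a l * b (g - l) = k := by
    intro b hball g s hs
    rw [← finsum_eq_finset_sum_of_support_subset _ (fun l hl => hs l hl)]
    exact hball g
  -- existence of nonzero term
  have hex : ∀ (b : (Fin d → ℤ) → ℕ), (∀ g, ∑ᶠ l, a l * b (g - l) = k) →
      ∀ g, ∃ l, a l ≠ 0 ∧ b (g - l) ≠ 0 := by
    intro b hball g
    by_contra hcon
    push_neg at hcon
    have hz : ∀ l, a l * b (g - l) = 0 := by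
      intro l
      rcases eq_or_ne (a l) 0 with h' | h'
      · simp [h']
      · simp [hcon l h']
    have h0 : ∑ᶠ l, a l * b (g - l) = 0 := by
      rw [finsum_congr hz, finsum_zero]
    rw [hball g] at h0
    omega
  -- a is bounded by k
  obtain ⟨l₀, -, hm0⟩ := hex c' h2 0
  have ha_le : ∀ l, a l ≤ k := by
    intro l
    set m₀ : Fin d → ℤ := (0 : Fin d → ℤ) - l₀ with hm₀def
    have hsum := h1' c' h2 (l + m₀) (insert l ((Wd d t).image (fun m => l + m₀ - m)))
      (by
        intro l' hl'
        have hb : c' (l + m₀ - l') ≠ 0 := fun h0 => by simp [h0] at hl'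
        refine Finset.mem_insert.mpr (Or.inr (Finset.mem_image.mpr ⟨l + m₀ - l', hc' _ hb, ?_⟩))
        abel)
    have hmem := Finset.mem_insert_self l ((Wd d t).image (fun m => l + m₀ - m))
    have hterm : a l * c' (l + m₀ - l) ≤ k := by
      rw [← hsum]
      exact Finset.single_le_sum (f := fun l' => a l' * c' (l + m₀ - l'))
        (fun _ _ => Nat.zero_le _) hmem
    have heq : l + m₀ - l = m₀ := by abel
    rw [heq] at hterm
    calc a l = a l * 1 := (mul_one _).symm
    _ ≤ a l * c' m₀ := by
        gcongr
        have : c' m₀ ≠ 0 := hm0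
        omega
    _ ≤ k := hterm
  -- main estimate, for every N
  have main : ∀ N : ℕ, (2*N+1)^d ≤ k * C' * (4*t*d*(6*t+1)^(d-1)) * (2*N+1)^(d-1) := by
    intro N
    set R1 : ℕ := (2*t+1)*N + t with hR1
    set R : ℕ := R1 + t with hR
    set R2 : ℕ := R + t with hR2
    -- reindexing sums of translates
    have himg : ∀ (b : (Fin d → ℤ) → ℕ) (l : Fin d → ℤ),
        ∑ g ∈ Wd d R, b (g - l) = ∑ m ∈ (Wd d R).image (fun g => g - l), b m := by
      intro b l
      rw [Finset.sum_image]
      intro x _ y _ h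
      have := congrArg (fun z => z + l) h
      simpa using this
    have tau_le : ∀ (b : (Fin d → ℤ) → ℕ), (∀ n, b n ≠ 0 → n ∈ Wd d t) →
        ∀ l : Fin d → ℤ, ∑ g ∈ Wd d R, b (g - l) ≤ ∑ n ∈ Wd d t, b n := by
      intro b hb l
      rw [himg b l]
      exact sum_le_total hb _
    have tau_eq : ∀ (b : (Fin d → ℤ) → ℕ), (∀ n, b n ≠ 0 → n ∈ Wd d t) →
        ∀ l ∈ Wd d R1, ∑ g ∈ Wd d R, b (g - l) = ∑ n ∈ Wd d t, b n := by
      intro b hb l hl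
      rw [himg b l]
      symm
      apply Finset.sum_subset
      · intro m hm
        rw [Finset.mem_image]
        refine ⟨m + l, ?_, by abel⟩
        rw [mem_Wd] at hm ⊢
        have hl' := mem_Wd.mp hl
        intro i
        have h3 := hm i
        have h4 := hl' i
        simp only [Pi.add_apply]
        omega
      · intro x hx hnx
        by_contra h0
        exact hnx (hb x h0)
    -- the key double-counting identity
    have key : ∀ (b : (Fin d → ℤ) → ℕ), (∀ n, b n ≠ 0 → n ∈ Wd d t) →
        (∀ g, ∑ᶠ l, a l * b (g - l) = k) →
        ∑ l ∈ Wd d R2, a l * (∑ g ∈ Wd d R, b (g - l)) = k * (2*R+1)^d := by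
      intro b hb hball
      have hsupp : ∀ g ∈ Wd d R, ∀ l, a l * b (g - l) ≠ 0 → l ∈ Wd d R2 := by
        intro g hg l hl
        have hbl : b (g - l) ≠ 0 := fun h0 => by simp [h0] at hl
        have h3 := mem_Wd.mp (hb _ hbl)
        have h4 := mem_Wd.mp hg
        rw [mem_Wd]
        intro i
        have h5 := h3 i
        have h6 := h4 i
        simp only [Pi.sub_apply] at h5
        omega
      calc ∑ l ∈ Wd d R2, a l * (∑ g ∈ Wd d R, b (g - l))
          = ∑ l ∈ Wd d R2, ∑ g ∈ Wd d R, a l * b (g - l) := by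
            simp only [Finset.mul_sum]
        _ = ∑ g ∈ Wd d R, ∑ l ∈ Wd d R2, a l * b (g - l) := Finset.sum_comm
        _ = ∑ g ∈ Wd d R, k :=
            Finset.sum_congr rfl (fun g hg => h1' b hball g _ (hsupp g hg))
        _ = k * (2*R+1)^d := by rw [Finset.sum_const, card_Wd, smul_eq_mul, mul_comm]

    -- lower bound on A
    have hA : (2*N+1)^d ≤ ∑ l ∈ Wd d R1, a l := by
      have hgex : ∀ n : Fin d → ℤ, ∃ l, a l ≠ 0 ∧
          c ((fun i => (2*(t:ℤ)+1) * n i) - l) ≠ 0 := fun n => hex c h1 _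
      choose F hF1 hF2 using hgex
      have hcoord : ∀ n i, -(t:ℤ) ≤ (2*(t:ℤ)+1) * n i - F n i ∧
          (2*(t:ℤ)+1) * n i - F n i ≤ t := by
        intro n i
        have h3 := mem_Wd.mp (hc _ (hF2 n)) i
        simpa [Pi.sub_apply] using h3
      have hinj : Set.InjOn F ↑(Wd d N) := by
        intro n hn n' hn' hFe
        funext i
        have h5 := hcoord n i
        rw [hFe] at h5
        have h6 := hcoord n' i
        exact int_squeeze (by positivity) h5.1 h5.2 h6.1 h6.2
      have hcast : ((R1:ℕ):ℤ) = (2*(t:ℤ)+1)*(N:ℤ) + t := by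
        rw [hR1]; push_cast; ring
      have himgsub : (Wd d N).image F ⊆ Wd d R1 := by
        intro l hl
        obtain ⟨n, hn, rfl⟩ := Finset.mem_image.mp hl
        rw [mem_Wd]
        intro i
        have h5 := hcoord n i
        have h6 := mem_Wd.mp hn i
        have h7 := int_range (by positivity) h6.1 h6.2 h5.1 h5.2
        rw [hcast]
        exact h7
      calc (2*N+1)^d = (Wd d N).card := (card_Wd d N).symm
      _ = ((Wd d N).image F).card := (Finset.card_image_of_injOn hinj).symm
      _ = ∑ _l ∈ (Wd d N).image F, 1 := by rw [Finset.card_eq_sum_ones]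
      _ ≤ ∑ l ∈ (Wd d N).image F, a l := Finset.sum_le_sum (fun l hl => by
            obtain ⟨n, hn, rfl⟩ := Finset.mem_image.mp hl
            have := hF1 n
            omega)
      _ ≤ ∑ l ∈ Wd d R1, a l := Finset.sum_le_sum_of_subset himgsub
    set A : ℕ := ∑ l ∈ Wd d R1, a l with hA_def
    have keyc := key c hc h1
    have keyc' := key c' hc' h2
    have hCA : C * A ≤ k * (2*R+1)^d := by
      calc C * A = ∑ l ∈ Wd d R1, a l * C := by rw [← Finset.sum_mul, mul_comm]
      _ = ∑ l ∈ Wd d R1, a l * (∑ g ∈ Wd d R, c (g - l)) :=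
          Finset.sum_congr rfl (fun l hl => by rw [tau_eq c hc l hl])
      _ ≤ ∑ l ∈ Wd d R2, a l * (∑ g ∈ Wd d R, c (g - l)) :=
          Finset.sum_le_sum_of_subset (Wd_mono (by omega))
      _ = k * (2*R+1)^d := keyc
    have hsplit : (∑ l ∈ Wd d R2 \ Wd d R1, a l * (∑ g ∈ Wd d R, c' (g - l))) + C' * A
        = k * (2*R+1)^d := by
      rw [← keyc', ← Finset.sum_sdiff (Wd_mono (show R1 ≤ R2 by omega))]
      congr 1
      rw [mul_comm, hA_def, Finset.sum_mul]
      exact Finset.sum_congr rfl (fun l hl => by rw [tau_eq c' hc' l hl])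
    have hE : ∑ l ∈ Wd d R2 \ Wd d R1, a l * (∑ g ∈ Wd d R, c' (g - l))
        ≤ ((2*R2+1)^d - (2*R1+1)^d) * (k * C') := by
      calc ∑ l ∈ Wd d R2 \ Wd d R1, a l * (∑ g ∈ Wd d R, c' (g - l))
          ≤ ∑ _l ∈ Wd d R2 \ Wd d R1, k * C' :=
            Finset.sum_le_sum (fun l _ => Nat.mul_le_mul (ha_le l) (tau_le c' hc' l))
        _ = (Wd d R2 \ Wd d R1).card * (k * C') := by rw [Finset.sum_const, smul_eq_mul]
        _ = ((2*R2+1)^d - (2*R1+1)^d) * (k * C') := by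
            rw [Finset.card_sdiff_of_subset (Wd_mono (by omega)), card_Wd, card_Wd]
    have hA2 : A ≤ ((2*R2+1)^d - (2*R1+1)^d) * (k * C') := by
      have h5 : C' * A + A ≤ C' * A + ((2*R2+1)^d - (2*R1+1)^d) * (k*C') := by
        calc C' * A + A = (C' + 1) * A := by ring
        _ ≤ C * A := Nat.mul_le_mul_right _ (by omega)
        _ ≤ k * (2*R+1)^d := hCA
        _ = (∑ l ∈ Wd d R2 \ Wd d R1, a l * (∑ g ∈ Wd d R, c' (g - l))) + C' * A :=
            hsplit.symm
        _ ≤ ((2*R2+1)^d - (2*R1+1)^d) * (k*C') + C' * A := Nat.add_le_add_right hE _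
        _ = C' * A + ((2*R2+1)^d - (2*R1+1)^d) * (k*C') := by ring
      exact Nat.le_of_add_le_add_left h5
    have hsc : (2*R2+1)^d - (2*R1+1)^d ≤ 4*t*d*(2*R2+1)^(d-1) := by
      have hp := pow_diff_le (2*R2+1) (2*R1+1) d (by omega)
      have h7 : (2*R2+1) - (2*R1+1) = 4*t := by omega
      rw [h7] at hp
      rw [Nat.sub_le_iff_le_add]
      linarith [hp]
    have hx : 2*R2+1 ≤ (6*t+1)*(2*N+1) := by
      have e : R2 = 2*t*N + N + 3*t := by rw [hR2, hR, hR1]; ring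
      rw [e]
      have h8 : 4*(t*N) ≤ 12*(t*N) := Nat.mul_le_mul_right _ (by norm_num)
      nlinarith [h8]
    have hxpow : (2*R2+1)^(d-1) ≤ (6*t+1)^(d-1) * (2*N+1)^(d-1) := by
      rw [← mul_pow]
      exact Nat.pow_le_pow_left hx _
    calc (2*N+1)^d ≤ A := hA
    _ ≤ ((2*R2+1)^d - (2*R1+1)^d) * (k * C') := hA2
    _ ≤ (4*t*d*(2*R2+1)^(d-1)) * (k * C') := Nat.mul_le_mul_right _ hsc
    _ ≤ (4*t*d*((6*t+1)^(d-1) * (2*N+1)^(d-1))) * (k * C') := by gcongr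
    _ = k * C' * (4*t*d*(6*t+1)^(d-1)) * (2*N+1)^(d-1) := by ring
  -- conclusion
  rcases Nat.eq_zero_or_pos d with hd | hd
  · subst hd
    have hfin := main 0
    simp at hfin
  · have hfin := main (k * C' * (4*t*d*(6*t+1)^(d-1)))
    set D := k * C' * (4*t*d*(6*t+1)^(d-1)) with hD
    have hpos : 0 < (2*D+1)^(d-1) := by positivity
    have heq : (2*D+1)^d = (2*D+1)^(d-1) * (2*D+1) := by
      rw [← pow_succ]
      congr 1
      omega
    rw [heq] at hfin
    have hcomm : D * (2*D+1)^(d-1) = (2*D+1)^(d-1) * D := Nat.mul_comm _ _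
    rw [hcomm] at hfin
    have hle := Nat.le_of_mul_le_mul_left hfin hpos
    omega

lemma core {d : ℕ} (k t : ℕ) (hk : 0 < k) (a c c' : (Fin d → ℤ) → ℕ)
    (hc : ∀ n, c n ≠ 0 → n ∈ Wd d t) (hc' : ∀ n, c' n ≠ 0 → n ∈ Wd d t)
    (h1 : ∀ g, ∑ᶠ l, a l * c (g - l) = k)
    (h2 : ∀ g, ∑ᶠ l, a l * c' (g - l) = k) :
    ∑ n ∈ Wd d t, c n = ∑ n ∈ Wd d t, c' n := by
  rcases lt_trichotomy (∑ n ∈ Wd d t, c n) (∑ n ∈ Wd d t, c' n) with h | h | h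
  · exact absurd h (core_aux k t hk a c' c hc' hc h2 h1)
  · exact h
  · exact absurd h (core_aux k t hk a c c' hc hc' h1 h2)

end CoreLemmas

-- ### auxiliary reindexing lemma
lemma finsum_reindex {d : ℕ} (f : Euc d → ℕ) (A : Set (Euc d))
    (j : (Fin d → ℤ) → Euc d) (hj : Function.Injective j)
    (hrange : Set.range j = A) (hsupp : ∀ l, f l ≠ 0 → l ∈ A) :
    ∑ᶠ l, f l = ∑ᶠ n, f (j n) := by
  have hss : Function.support f ⊆ Set.range j := fun x hx => hrange ▸ hsupp x hx
  rw [← finsum_mem_univ, finsum_mem_inter_support_eq f Set.univ (Set.range j)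
    (by rw [Set.univ_inter, Set.inter_eq_right.mpr hss])]
  exact finsum_mem_range hj


/-- If a convex polytope `P` `k`-tiles ℝ^d with a discrete multiset Λ
all of whose elements lie in a lattice `L`, then `P` `m`-tiles ℝ^d with `L`
(each point with multiplicity one) for some positive integer `m`. -/
theorem stmt_1 {d : ℕ} (P : Set (Euc d)) (hP : IsConvexPolytope P)
    (k : ℕ) (hk : 0 < k) (Λ : Euc d → ℕ) (hΛ : IsDiscreteMultiset Λ)
    (hTile : Tiles P Λ k) (L : Set (Euc d)) (hL : IsLattice L)
    (hsub : ∀ x : Euc d, Λ x ≠ 0 → x ∈ L) :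
    ∃ m : ℕ, 0 < m ∧ Tiles P (setMult L) m := by
  classical
  obtain ⟨H, rfl, hHdisc, hHspan⟩ := hL
  -- polytope properties
  obtain ⟨⟨S, hSfin, hPS⟩, hPint⟩ := hP
  have hPcompact : IsCompact P := hPS ▸ hSfin.isCompact_convexHull ℝ
  have hPconv : Convex ℝ P := hPS ▸ convex_convexHull ℝ S
  have hPbdd : Bornology.IsBounded P := hPcompact.isBounded
  -- lattice structure
  set M : Submodule ℤ (Euc d) := AddSubgroup.toIntSubmodule H with hM
  haveI : DiscreteTopology M := hHdisc
  haveI : IsZLattice ℝ M := ⟨by rw [AddSubgroup.coe_toIntSubmodule]; exact hHspan⟩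
  haveI := ZLattice.module_free ℝ M
  haveI : Module.Finite ℤ M := Module.Finite.iff_fg.mpr (ZLattice.FG ℝ M)
  have hrank : Module.finrank ℤ M = d := by
    rw [ZLattice.rank ℝ M, finrank_euclideanSpace_fin]
  have hcard : Fintype.card (Module.Free.ChooseBasisIndex ℤ M) = d := by
    rw [← Module.finrank_eq_card_chooseBasisIndex, hrank]
  have hMS : (M : Set (Euc d)) = (H : Set (Euc d)) := AddSubgroup.coe_toIntSubmodule H
  set bM : Module.Basis (Fin d) ℤ M :=
    (Module.Free.chooseBasis ℤ M).reindex (Fintype.equivFinOfCardEq hcard) with hbM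
  set ι : (Fin d → ℤ) → Euc d := fun n => ((bM.equivFun.symm n : M) : Euc d) with hι
  have hι_inj : Function.Injective ι := by
    intro x y hxy
    exact bM.equivFun.symm.injective (Subtype.coe_injective hxy)
  have hι_mem : ∀ n, ι n ∈ (H : Set (Euc d)) := by
    intro n
    have h1 : ((bM.equivFun.symm n : M) : Euc d) ∈ (M : Set (Euc d)) :=
      (bM.equivFun.symm n).2
    rwa [hMS] at h1
  have hι_range : Set.range ι = (H : Set (Euc d)) := by
    apply Set.Subset.antisymm
    · rintro x ⟨n, rfl⟩
      exact hι_mem n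
    · intro x hx
      have hxM : x ∈ M := by rw [← hMS] at hx; exact hx
      refine ⟨bM.equivFun ⟨x, hxM⟩, ?_⟩
      show ((bM.equivFun.symm (bM.equivFun ⟨x, hxM⟩) : M) : Euc d) = x
      rw [LinearEquiv.symm_apply_apply]
  have hι_sub : ∀ m n, ι (m - n) = ι m - ι n := by
    intro m n
    simp only [hι, map_sub]
    rfl
  have hι_neg : ∀ n, ι (-n) = - ι n := by
    intro n
    simp only [hι, map_neg]
    rfl
  -- finiteness of lattice points in bounded sets
  haveI : DiscreteTopology ((H : Set (Euc d))) := hHdisc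
  have hHclosed : IsClosed (H : Set (Euc d)) := AddSubgroup.isClosed_of_discrete
  have hfinK : ∀ K : Set (Euc d), Bornology.IsBounded K →
      ((K ∩ (H : Set (Euc d))) : Set (Euc d)).Finite :=
    fun K hK => Metric.finite_isBounded_inter_isClosed DiscreteTopology.isDiscrete hK hHclosed
  -- the coefficient functions on the lattice coordinates
  set cf : Euc d → (Fin d → ℤ) → ℕ := fun w n => P.indicator 1 (w + ι n) with hcf
  -- bounded support
  have hsupp_bound : ∀ w : Euc d, ∃ tb : ℕ, ∀ n, cf w n ≠ 0 → n ∈ Wd d tb := by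
    intro w
    obtain ⟨r, hr⟩ := hPbdd.subset_closedBall 0
    have hsub2 : {n : Fin d → ℤ | cf w n ≠ 0} ⊆
        ι ⁻¹' (Metric.closedBall 0 (r + ‖w‖) ∩ (H : Set (Euc d))) := by
      intro n hn
      have hmem : w + ι n ∈ P := by
        by_contra hmem
        simp only [hcf, Set.indicator_of_notMem hmem, Set.mem_setOf_eq] at hn
        exact hn rfl
      refine Set.mem_preimage.mpr ⟨?_, hι_mem n⟩
      have h1 : ‖w + ι n‖ ≤ r := by
        have := hr hmem
        rwa [Metric.mem_closedBall, dist_zero_right] at this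
      rw [Metric.mem_closedBall, dist_zero_right]
      calc ‖ι n‖ = ‖(w + ι n) - w‖ := by congr 1; abel
      _ ≤ ‖w + ι n‖ + ‖w‖ := norm_sub_le _ _
      _ ≤ r + ‖w‖ := by linarith
    have hfin2 : {n : Fin d → ℤ | cf w n ≠ 0}.Finite :=
      Set.Finite.subset (Set.Finite.preimage hι_inj.injOn
        (hfinK _ Metric.isBounded_closedBall)) hsub2
    obtain ⟨tb, htbdef⟩ : ∃ tb : ℕ, tb = hfin2.toFinset.sup
        (fun n => Finset.univ.sup (fun i => (n i).natAbs)) := ⟨_, rfl⟩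
    refine ⟨tb, ?_⟩
    intro n hn
    rw [mem_Wd]
    intro i
    have h1 : n ∈ hfin2.toFinset := hfin2.mem_toFinset.mpr hn
    have h2 : (n i).natAbs ≤ tb := by
      rw [htbdef]
      exact le_trans (Finset.le_sup (f := fun i => (n i).natAbs) (Finset.mem_univ i))
        (Finset.le_sup (f := fun n => Finset.univ.sup (fun i => (n i).natAbs)) h1)
    clear htbdef
    omega
  -- translates of good points stay good for Λ
  have hbd_mono : ∀ w : Euc d, w ∉ boundarySum P (setMult (H : Set (Euc d))) →
      ∀ g : Fin d → ℤ, w + ι g ∉ boundarySum P Λ := by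
    rintro w hw g ⟨l, hl1, hl2⟩
    have hlH : l ∈ (H : Set (Euc d)) := hsub l hl1
    apply hw
    refine ⟨l - ι g, ?_, ?_⟩
    · have h3 : l - ι g ∈ (H : Set (Euc d)) := H.sub_mem hlH (hι_mem g)
      simp [setMult, Set.indicator_of_mem h3]
    · have h4 : w - (l - ι g) = w + ι g - l := by abel
      rw [h4]; exact hl2
  -- the convolution identities
  have hconv : ∀ w : Euc d, w ∉ boundarySum P (setMult (H : Set (Euc d))) →
      ∀ g : Fin d → ℤ, ∑ᶠ n, Λ (ι n) * cf w (g - n) = k := by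
    intro w hw g
    have hcover := hTile (w + ι g) (hbd_mono w hw g)
    rw [coverCount] at hcover
    rw [← hcover, finsum_reindex (fun l => Λ l * P.indicator 1 (w + ι g - l))
      (H : Set (Euc d)) ι hι_inj hι_range
      (fun l hl => hsub l (fun h0 => hl (by simp [h0])))]
    apply finsum_congr
    intro n
    congr 1
    show P.indicator 1 (w + ι (g - n)) = P.indicator 1 (w + ι g - ι n)
    rw [hι_sub]
    congr 1
    abel
  -- the lattice covering number
  have hNval : ∀ w : Euc d, coverCount (setMult (H : Set (Euc d))) P w = ∑ᶠ n, cf w n := by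
    intro w
    rw [coverCount]
    have hrange2 : Set.range (fun n : Fin d → ℤ => ι (-n)) = (H : Set (Euc d)) := by
      apply Set.Subset.antisymm
      · rintro x ⟨n, rfl⟩
        exact hι_mem (-n)
      · intro x hx
        rw [← hι_range] at hx
        obtain ⟨n, rfl⟩ := hx
        exact ⟨-n, by show ι (- -n) = ι n; rw [neg_neg]⟩
    rw [finsum_reindex (fun l => setMult (H : Set (Euc d)) l * P.indicator 1 (w - l))
      (H : Set (Euc d)) (fun n => ι (-n)) (fun x y hxy => neg_injective (hι_inj hxy))
      hrange2 (fun l hl => by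
        by_contra h0
        simp [setMult, Set.indicator_of_notMem h0] at hl)]
    apply finsum_congr
    intro n
    have h5 : setMult (H : Set (Euc d)) (ι (-n)) = 1 := by
      simp [setMult, Set.indicator_of_mem (hι_mem (-n))]
    rw [h5, one_mul, hι_neg]
    show P.indicator 1 (w - -ι n) = P.indicator 1 (w + ι n)
    congr 1
    abel
  -- finsum as finite sum
  have hfs : ∀ (w : Euc d) (tb : ℕ), (∀ n, cf w n ≠ 0 → n ∈ Wd d tb) →
      ∑ᶠ n, cf w n = ∑ n ∈ Wd d tb, cf w n := by
    intro w tb htb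
    exact finsum_eq_finset_sum_of_support_subset _ (fun n hn => htb n hn)
  -- equality of lattice covering numbers at good points
  have hmain : ∀ v w : Euc d, v ∉ boundarySum P (setMult (H : Set (Euc d))) →
      w ∉ boundarySum P (setMult (H : Set (Euc d))) →
      coverCount (setMult (H : Set (Euc d))) P v
        = coverCount (setMult (H : Set (Euc d))) P w := by
    intro v w hv hw
    obtain ⟨tv, htv⟩ := hsupp_bound v
    obtain ⟨tw, htw⟩ := hsupp_bound w
    have hcv : ∀ n, cf v n ≠ 0 → n ∈ Wd d (max tv tw) :=
      fun n hn => Wd_mono (le_max_left tv tw) (htv n hn)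
    have hcw : ∀ n, cf w n ≠ 0 → n ∈ Wd d (max tv tw) :=
      fun n hn => Wd_mono (le_max_right tv tw) (htw n hn)
    have hcore := core k (max tv tw) hk (fun n => Λ (ι n)) (cf v) (cf w) hcv hcw
      (hconv v hv) (hconv w hw)
    rw [hNval v, hNval w, hfs v _ hcv, hfs w _ hcw, hcore]
  -- there is a good point
  have hbd_ne : ∃ v : Euc d, v ∉ boundarySum P (setMult (H : Set (Euc d))) := by
    have hcnt : (H : Set (Euc d)).Countable := by
      have h9 : Countable M := inferInstance
      rw [← hMS]
      exact Set.countable_coe_iff.mp h9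
    have hbdeq : boundarySum P (setMult (H : Set (Euc d))) =
        ⋃ l ∈ (H : Set (Euc d)), (l +ᵥ frontier P) := by
      ext x
      simp only [boundarySum, Set.mem_setOf_eq, Set.mem_iUnion]
      constructor
      · rintro ⟨l, hl1, hl2⟩
        have hlH : l ∈ (H : Set (Euc d)) := by
          by_contra h0
          exact hl1 (by simp [setMult, Set.indicator_of_notMem h0])
        exact ⟨l, hlH, ⟨x - l, hl2, by show l + (x - l) = x; abel⟩⟩
      · rintro ⟨l, hlH, y, hy, rfl⟩
        refine ⟨l, by simp [setMult, Set.indicator_of_mem hlH], ?_⟩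
        simpa [vadd_eq_add, add_sub_cancel_left] using hy
    have hnull : MeasureTheory.volume (boundarySum P (setMult (H : Set (Euc d)))) = 0 := by
      rw [hbdeq, MeasureTheory.measure_biUnion_null_iff hcnt]
      intro l _
      rw [MeasureTheory.measure_vadd]
      exact hPconv.addHaar_frontier _
    by_contra hcon
    push_neg at hcon
    have huniv : boundarySum P (setMult (H : Set (Euc d))) = Set.univ :=
      Set.eq_univ_of_forall hcon
    rw [huniv] at hnull
    exact isOpen_univ.measure_ne_zero MeasureTheory.volume ⟨0, trivial⟩ hnull
  obtain ⟨v₀, hv₀⟩ := hbd_ne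
  obtain ⟨t0, ht0⟩ := hsupp_bound v₀
  refine ⟨coverCount (setMult (H : Set (Euc d))) P v₀, ?_, ?_⟩
  · -- positivity
    have h0 := hconv v₀ hv₀ 0
    have hex0 : ∃ n, Λ (ι n) * cf v₀ (0 - n) ≠ 0 := by
      by_contra hcon
      push_neg at hcon
      rw [finsum_congr hcon, finsum_zero] at h0
      omega
    obtain ⟨n, hn⟩ := hex0
    have hcfn : cf v₀ (0 - n) ≠ 0 := fun h0' => hn (by rw [h0', mul_zero])
    have hmem := ht0 _ hcfn
    have h6 : 1 ≤ ∑ m ∈ Wd d t0, cf v₀ m :=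
      le_trans (by omega) (Finset.single_le_sum (f := cf v₀) (fun _ _ => Nat.zero_le _) hmem)
    rw [hNval, hfs v₀ t0 ht0]
    omega
  · intro w hw
    exact hmain w v₀ hw hv₀
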